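/- Let μ > 0. For all real x, y and all real a, b, the following algebraic identity holds: ( a·√((A₁+x+y)(A₂+x−y)) − b·√((A₁−x−y)(A₂−x+y)) + (b−a)·√((A₁−x−y)(A₂+x−y)) + (b−a)·√((A₁+x+y)(A₂−x+y)) )² = a²·( 3A₁A₂ + (x+y)A₂ + (x−y)A₁ − (x²−y²) − 4μ(A₁+A₂+2x) + 8μ² ) + b²·( 3A₁A₂ − (x+y)A₂ − (x−y)A₁ − (x²−y²) − 4μ(A₁+A₂−2x) + 8μ² ) + 2ab·( 4μA₁ + 4μA₂ − 2A₁A₂ + 2(x²−y²) − 12μ² ), where A₁ = A₁(x,y) and A₂ = A₂(x,y). (Note A₁ ≥ |x+y| and A₂ ≥ |x−y|, so all square roots are of nonnegative numbers, and A₁² − (x+y)² = A₂² − (x−y)² = 4μ².) -/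
import Mathlib


noncomputable def A1 (μ x y : ℝ) : ℝ := Real.sqrt ((x + y)^2 + 4*μ^2)
noncomputable def A2 (μ x y : ℝ) : ℝ := Real.sqrt ((x - y)^2 + 4*μ^2)

theorem stmt11 (μ : ℝ) (hμ : 0 < μ) (x y a b : ℝ) :
    (a * Real.sqrt ((A1 μ x y + x + y) * (A2 μ x y + x - y))
      - b * Real.sqrt ((A1 μ x y - x - y) * (A2 μ x y - x + y))
      + (b - a) * Real.sqrt ((A1 μ x y - x - y) * (A2 μ x y + x - y))
      + (b - a) * Real.sqrt ((A1 μ x y + x + y) * (A2 μ x y - x + y)))^2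
    = a^2 * (3 * A1 μ x y * A2 μ x y + (x + y) * A2 μ x y + (x - y) * A1 μ x y
          - (x^2 - y^2) - 4*μ*(A1 μ x y + A2 μ x y + 2*x) + 8*μ^2)
      + b^2 * (3 * A1 μ x y * A2 μ x y - (x + y) * A2 μ x y - (x - y) * A1 μ x y
          - (x^2 - y^2) - 4*μ*(A1 μ x y + A2 μ x y - 2*x) + 8*μ^2)
      + 2*a*b * (4*μ*A1 μ x y + 4*μ*A2 μ x y - 2*(A1 μ x y)*(A2 μ x y)
          + 2*(x^2 - y^2) - 12*μ^2) := by
  have hA1sq : (A1 μ x y)^2 = (x + y)^2 + 4*μ^2 := Real.sq_sqrt (by positivity)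
  have hA2sq : (A2 μ x y)^2 = (x - y)^2 + 4*μ^2 := Real.sq_sqrt (by positivity)
  have hA1abs : |x + y| ≤ A1 μ x y := by
    rw [← Real.sqrt_sq_eq_abs]
    exact Real.sqrt_le_sqrt (by nlinarith)
  have hA2abs : |x - y| ≤ A2 μ x y := by
    rw [← Real.sqrt_sq_eq_abs]
    exact Real.sqrt_le_sqrt (by nlinarith)
  have h1p : (0:ℝ) ≤ A1 μ x y + x + y := by
    have := abs_le.mp hA1abs; linarith [this.1]
  have h1m : (0:ℝ) ≤ A1 μ x y - x - y := by
    have := abs_le.mp hA1abs; linarith [this.2]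
  have h2p : (0:ℝ) ≤ A2 μ x y + x - y := by
    have := abs_le.mp hA2abs; linarith [this.1]
  have h2m : (0:ℝ) ≤ A2 μ x y - x + y := by
    have := abs_le.mp hA2abs; linarith [this.2]
  set p := Real.sqrt (A1 μ x y + x + y) with hpdef
  set q := Real.sqrt (A1 μ x y - x - y) with hqdef
  set r := Real.sqrt (A2 μ x y + x - y) with hrdef
  set s := Real.sqrt (A2 μ x y - x + y) with hsdef
  have hp : p^2 = A1 μ x y + x + y := Real.sq_sqrt h1p
  have hq : q^2 = A1 μ x y - x - y := Real.sq_sqrt h1m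
  have hr : r^2 = A2 μ x y + x - y := Real.sq_sqrt h2p
  have hs : s^2 = A2 μ x y - x + y := Real.sq_sqrt h2m
  have hpq : p * q = 2 * μ := by
    rw [hpdef, hqdef, ← Real.sqrt_mul h1p]
    rw [show (A1 μ x y + x + y) * (A1 μ x y - x - y) = (2*μ)^2 by nlinarith]
    exact Real.sqrt_sq (by positivity)
  have hrs : r * s = 2 * μ := by
    rw [hrdef, hsdef, ← Real.sqrt_mul h2p]
    rw [show (A2 μ x y + x - y) * (A2 μ x y - x + y) = (2*μ)^2 by nlinarith]
    exact Real.sqrt_sq (by positivity)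
  rw [Real.sqrt_mul h1p, Real.sqrt_mul h1m, Real.sqrt_mul h1m, Real.sqrt_mul h1p,
      ← hpdef, ← hqdef, ← hrdef, ← hsdef]
  linear_combination
    (a^2*r^2 + (b-a)^2*s^2 + 2*a*(b-a)*(r*s)) * hp
    + (b^2*s^2 + (b-a)^2*r^2 - 2*b*(b-a)*(r*s)) * hq
    + (a^2*(A1 μ x y + x + y) + (b-a)^2*(A1 μ x y - x - y) + 4*a*(b-a)*μ) * hr
    + (b^2*(A1 μ x y - x - y) + (b-a)^2*(A1 μ x y + x + y) - 4*b*(b-a)*μ) * hs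
    + (-2*a*b*(r*s) + 2*a*(b-a)*r^2 - 2*b*(b-a)*s^2 + 2*(b-a)^2*(r*s)) * hpq
    + (-4*a*b*μ + 2*a*(b-a)*(A1 μ x y + x + y) - 2*b*(b-a)*(A1 μ x y - x - y) + 4*(b-a)^2*μ) * hrs
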